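/- Fix D ≥ 1, an integer C ≥ 2, a real K > 0, x ∈ ℝ^D with ‖x‖ = 1, and a label y ∈ {1,…,C}. Consider the loss L(A₁,…,A_C) = −⟨A_y, x⟩ + log(Σ_{c=1}^C exp(⟨A_c, x⟩)) on tuples (A₁,…,A_C) ∈ (ℝ^D)^C satisfying Σ_{c=1}^C ‖A_c‖² ≤ K. Then the unique global minimizer of L on this constraint set is given by A_c* = √((C−1)K/C) · x for c = y and A_c* = −√(K/(C(C−1))) · x for every c ≠ y. -/

import Mathlib

open RealInnerProductSpace

lemma sum_ite_const_aux {C : ℕ} (y : Fin C) (u v : ℝ) :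
    ∑ c : Fin C, (if c = y then u else v) = u + ((C : ℝ) - 1) * v := by
  rw [← Finset.add_sum_erase _ _ (Finset.mem_univ y), if_pos rfl]
  have h1 : ∀ c ∈ Finset.univ.erase y, (if c = y then u else v) = v := by
    intro c hc; rw [if_neg (Finset.ne_of_mem_erase hc)]
  rw [Finset.sum_congr rfl h1, Finset.sum_const, Finset.card_erase_of_mem (Finset.mem_univ y),
    Finset.card_univ, Fintype.card_fin, nsmul_eq_mul, Nat.cast_pred y.pos]

lemma core_aux (C : ℕ) (hC : 2 ≤ C) (K : ℝ) (hK : 0 < K) (y : Fin C) (t : Fin C → ℝ)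
    (ht : ∑ c, t c ^ 2 ≤ K) (ts : Fin C → ℝ)
    (hts : ∀ c, ts c = if c = y then Real.sqrt (((C : ℝ) - 1) * K / (C : ℝ))
      else -Real.sqrt (K / ((C : ℝ) * ((C : ℝ) - 1)))) :
    (-ts y + Real.log (∑ c, Real.exp (ts c)) ≤ -t y + Real.log (∑ c, Real.exp (t c))) ∧
    ((-t y + Real.log (∑ c, Real.exp (t c)) = -ts y + Real.log (∑ c, Real.exp (ts c))) → t = ts) := by
  have hn : (2 : ℝ) ≤ (C : ℝ) := by exact_mod_cast hC
  set n : ℝ := (C : ℝ) with hndef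
  have hn0 : 0 < n := by linarith
  have hn1 : 0 < n - 1 := by linarith
  set a := Real.sqrt ((n - 1) * K / n) with hadef
  set b := Real.sqrt (K / (n * (n - 1))) with hbdef
  have ha2 : a ^ 2 = (n - 1) * K / n := Real.sq_sqrt (by positivity)
  have hb2 : b ^ 2 = K / (n * (n - 1)) := Real.sq_sqrt (by positivity)
  have hapos : 0 < a := Real.sqrt_pos.2 (by positivity)
  have hbpos : 0 < b := Real.sqrt_pos.2 (by positivity)
  have hab : a = (n - 1) * b := by
    have h1 : (n - 1) * b = Real.sqrt ((n - 1) ^ 2 * (K / (n * (n - 1)))) := by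
      rw [Real.sqrt_mul (sq_nonneg _), Real.sqrt_sq hn1.le]
    rw [hadef, h1]
    congr 1
    field_simp
  have hKab : K = n * (a * b) := by
    have h : n * (a * b) = n * ((n - 1) * b ^ 2) := by rw [hab]; ring
    rw [h, hb2]
    field_simp
  have htsy : ts y = a := by rw [hts y, if_pos rfl]
  set S := ∑ c, Real.exp (ts c) with hSdef
  have hSpos : 0 < S := Finset.sum_pos (fun c _ => Real.exp_pos _) ⟨y, Finset.mem_univ y⟩
  have hSval : S = Real.exp a + (n - 1) * Real.exp (-b) := by
    rw [hSdef]
    rw [Finset.sum_congr rfl (fun c _ => by rw [hts c, apply_ite Real.exp])]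
    exact sum_ite_const_aux y _ _
  have hts_sq : ∑ c, ts c ^ 2 = K := by
    rw [Finset.sum_congr rfl (fun c _ => by rw [hts c, apply_ite (· ^ 2)])]
    rw [sum_ite_const_aux y _ _]
    rw [neg_pow]
    nlinarith
  set py := Real.exp a / S with hpydef
  set q := Real.exp (-b) / S with hqdef
  have hqpos : 0 < q := div_pos (Real.exp_pos _) hSpos
  have hpypos : 0 < py := div_pos (Real.exp_pos _) hSpos
  set p : Fin C → ℝ := fun c => Real.exp (ts c) / S with hpdef
  have hpite : ∀ c, p c = if c = y then py else q := by
    intro c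
    show Real.exp (ts c) / S = _
    rw [hts c]
    by_cases h : c = y <;> simp [h, hpydef, hqdef]
  have hp1 : ∑ c, p c = 1 := by
    show ∑ c, Real.exp (ts c) / S = 1
    rw [← Finset.sum_div, ← hSdef, div_self (ne_of_gt hSpos)]
  have hpq1 : py + (n - 1) * q = 1 := by
    have h := hp1
    rw [Finset.sum_congr rfl (fun c _ => hpite c), sum_ite_const_aux y _ _] at h
    exact h
  set T := ∑ c, Real.exp (t c) with hTdef
  have hTpos : 0 < T := Finset.sum_pos (fun c _ => Real.exp_pos _) ⟨y, Finset.mem_univ y⟩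
  -- Jensen
  have hJ : Real.exp (∑ c, p c * (t c - ts c)) ≤ ∑ c, p c * Real.exp (t c - ts c) := by
    have := convexOn_exp.map_sum_le (t := Finset.univ) (w := p) (p := fun c => t c - ts c)
      (fun i _ => by show 0 ≤ Real.exp (ts i) / S; exact (div_pos (Real.exp_pos _) hSpos).le) hp1 (fun i _ => Set.mem_univ _)
    simpa [smul_eq_mul] using this
  have hrhs : ∑ c, p c * Real.exp (t c - ts c) = T / S := by
    rw [hTdef, Finset.sum_div]
    refine Finset.sum_congr rfl (fun c _ => ?_)
    show Real.exp (ts c) / S * Real.exp (t c - ts c) = _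
    rw [Real.exp_sub]
    field_simp
  have hB : ∑ c, p c * (t c - ts c) ≤ Real.log T - Real.log S := by
    have h1 : Real.exp (∑ c, p c * (t c - ts c)) ≤ T / S := by rw [← hrhs]; exact hJ
    have h2 := Real.log_le_log (Real.exp_pos _) h1
    rwa [Real.log_exp, Real.log_div (ne_of_gt hTpos) (ne_of_gt hSpos)] at h2
  -- sums as linear functions of t
  have hsum_pt : ∑ c, p c * t c = q * (∑ c, t c) + (py - q) * t y := by
    have : ∀ c ∈ Finset.univ, p c * t c = q * t c + (if c = y then (py - q) * t c else 0) := by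
      intro c _
      rw [hpite c]
      by_cases h : c = y <;> simp [h] <;> ring
    rw [Finset.sum_congr rfl this, Finset.sum_add_distrib, ← Finset.mul_sum,
      Finset.sum_ite_eq' Finset.univ y (fun c => (py - q) * t c), if_pos (Finset.mem_univ y)]
  have hsum_tst : ∑ c, ts c * t c = -b * (∑ c, t c) + (a + b) * t y := by
    have : ∀ c ∈ Finset.univ, ts c * t c = -b * t c + (if c = y then (a + b) * t c else 0) := by
      intro c _
      rw [hts c]
      by_cases h : c = y <;> simp [h] <;> ring
    rw [Finset.sum_congr rfl this, Finset.sum_add_distrib, ← Finset.mul_sum,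
      Finset.sum_ite_eq' Finset.univ y (fun c => (a + b) * t c), if_pos (Finset.mem_univ y)]
  have hsum_pts : ∑ c, p c * ts c = py * a + (n - 1) * (q * -b) := by
    have : ∀ c ∈ Finset.univ, p c * ts c = if c = y then py * a else q * -b := by
      intro c _
      rw [hpite c, hts c]
      by_cases h : c = y <;> simp [h]
    rw [Finset.sum_congr rfl this, sum_ite_const_aux y _ _]
  -- the key identity
  have hD : b * ((a - t y) + ∑ c, p c * (t c - ts c)) = q * (K - ∑ c, ts c * t c) := by
    have hexp : ∑ c, p c * (t c - ts c) = (∑ c, p c * t c) - ∑ c, p c * ts c := by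
      rw [← Finset.sum_sub_distrib]
      exact Finset.sum_congr rfl (fun c _ => by ring)
    rw [hexp, hsum_pt, hsum_pts, hsum_tst, hKab, hab]
    linear_combination (b * t y - (n - 1) * b ^ 2) * hpq1
  clear_value n a b S py q T p
  -- Cauchy-Schwarz
  have hCS : ∑ c, ts c * t c ≤ K := by
    have h2 := Finset.sum_mul_sq_le_sq_mul_sq Finset.univ ts t
    rw [hts_sq] at h2
    have h3 : (∑ c, ts c * t c) ^ 2 ≤ K ^ 2 :=
      le_trans h2 (by rw [sq]; exact mul_le_mul_of_nonneg_left ht hK.le)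
    calc ∑ c, ts c * t c ≤ |∑ c, ts c * t c| := le_abs_self _
      _ = Real.sqrt ((∑ c, ts c * t c) ^ 2) := (Real.sqrt_sq_eq_abs _).symm
      _ ≤ Real.sqrt (K ^ 2) := Real.sqrt_le_sqrt h3
      _ = K := Real.sqrt_sq hK.le
  have hkey : q * (K - ∑ c, ts c * t c) ≤ b * ((-t y + Real.log T) - (-a + Real.log S)) := by
    calc q * (K - ∑ c, ts c * t c)
        = b * (a - t y) + b * (∑ c, p c * (t c - ts c)) := by rw [← hD]; ring
      _ ≤ b * (a - t y) + b * (Real.log T - Real.log S) := by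
          linarith [mul_le_mul_of_nonneg_left hB hbpos.le]
      _ = b * ((-t y + Real.log T) - (-a + Real.log S)) := by ring
  have hnn : 0 ≤ q * (K - ∑ c, ts c * t c) :=
    mul_nonneg hqpos.le (by linarith)
  have hX : 0 ≤ (-t y + Real.log T) - (-a + Real.log S) := by
    have hbx : 0 ≤ b * ((-t y + Real.log T) - (-a + Real.log S)) := le_trans hnn hkey
    exact le_of_mul_le_mul_left (by rw [mul_zero]; exact hbx) hbpos
  constructor
  · rw [htsy]; linarith
  · intro heq
    rw [htsy] at heq
    have hXz : (-t y + Real.log T) - (-a + Real.log S) = 0 := by rw [heq]; ring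
    have h0 : q * (K - ∑ c, ts c * t c) ≤ 0 := by
      rw [hXz, mul_zero] at hkey; exact hkey
    have hKeq : ∑ c, ts c * t c = K := by
      have h1 : K - ∑ c, ts c * t c ≤ 0 :=
        le_of_mul_le_mul_left (by rw [mul_zero]; exact h0) hqpos
      linarith [hCS]
    have hsq : ∑ c, (t c - ts c) ^ 2 ≤ 0 := by
      have hexp : ∑ c, (t c - ts c) ^ 2
          = (∑ c, t c ^ 2) - 2 * (∑ c, ts c * t c) + ∑ c, ts c ^ 2 := by
        have h5 : ∀ c ∈ Finset.univ, (t c - ts c) ^ 2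
            = t c ^ 2 - 2 * (ts c * t c) + ts c ^ 2 := fun c _ => by ring
        rw [Finset.sum_congr rfl h5, Finset.sum_add_distrib, Finset.sum_sub_distrib,
          ← Finset.mul_sum]
      rw [hexp, hKeq, hts_sq]
      linarith
    have hzero : ∀ c ∈ Finset.univ, (t c - ts c) ^ 2 = 0 := by
      rw [← Finset.sum_eq_zero_iff_of_nonneg (fun c _ => sq_nonneg _)]
      have : 0 ≤ ∑ c, (t c - ts c) ^ 2 := Finset.sum_nonneg (fun c _ => sq_nonneg _)
      linarith
    funext c
    have := hzero c (Finset.mem_univ c)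
    have := pow_eq_zero_iff (n := 2) (by norm_num) |>.mp this
    linarith [this]

theorem optimal_templates (D C : ℕ) (hD : 1 ≤ D) (hC : 2 ≤ C) (K : ℝ) (hK : 0 < K)
    (x : EuclideanSpace ℝ (Fin D)) (hx : ‖x‖ = 1) (y : Fin C)
    (L : (Fin C → EuclideanSpace ℝ (Fin D)) → ℝ)
    (hL : ∀ A, L A = -⟪A y, x⟫ + Real.log (∑ c, Real.exp ⟪A c, x⟫))
    (Astar : Fin C → EuclideanSpace ℝ (Fin D))
    (hAstar : ∀ c, Astar c =
      if c = y then Real.sqrt (((C : ℝ) - 1) * K / (C : ℝ)) • x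
      else (-Real.sqrt (K / ((C : ℝ) * ((C : ℝ) - 1)))) • x) :
    (∑ c, ‖Astar c‖ ^ 2 ≤ K) ∧
      ∀ A : Fin C → EuclideanSpace ℝ (Fin D), (∑ c, ‖A c‖ ^ 2 ≤ K) →
        L Astar ≤ L A ∧ (L A = L Astar → A = Astar) := by
  set ts : Fin C → ℝ := fun c => if c = y then Real.sqrt (((C : ℝ) - 1) * K / (C : ℝ))
    else -Real.sqrt (K / ((C : ℝ) * ((C : ℝ) - 1))) with htsdef
  have hts : ∀ c, ts c = if c = y then Real.sqrt (((C : ℝ) - 1) * K / (C : ℝ))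
      else -Real.sqrt (K / ((C : ℝ) * ((C : ℝ) - 1))) := fun c => rfl
  have hn : (2 : ℝ) ≤ (C : ℝ) := by exact_mod_cast hC
  have hAstar' : ∀ c, Astar c = ts c • x := by
    intro c
    rw [hAstar c, hts c]
    by_cases h : c = y <;> simp [h]
  have hinner_star : ∀ c, ⟪Astar c, x⟫ = ts c := by
    intro c
    rw [hAstar' c, real_inner_smul_left, real_inner_self_eq_norm_sq, hx]
    ring
  have hnorm_star : ∀ c, ‖Astar c‖ ^ 2 = ts c ^ 2 := by
    intro c
    rw [hAstar' c, norm_smul, hx, mul_one, Real.norm_eq_abs, sq_abs]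
  have hts_sq : ∑ c, ts c ^ 2 = K := by
    have hn0 : (0 : ℝ) < (C : ℝ) := by linarith
    have hn1 : (0 : ℝ) < (C : ℝ) - 1 := by linarith
    rw [Finset.sum_congr rfl (fun c _ => by rw [hts c, apply_ite (· ^ 2)])]
    rw [sum_ite_const_aux y _ _, neg_pow,
      Real.sq_sqrt (by positivity : 0 ≤ ((C : ℝ) - 1) * K / (C : ℝ)),
      Real.sq_sqrt (by positivity : 0 ≤ K / ((C : ℝ) * ((C : ℝ) - 1)))]
    field_simp
    ring
  have hsum_star : ∑ c, ‖Astar c‖ ^ 2 = K := by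
    rw [Finset.sum_congr rfl (fun c _ => hnorm_star c), hts_sq]
  have hLstar : L Astar = -ts y + Real.log (∑ c, Real.exp (ts c)) := by
    rw [hL Astar, hinner_star y]
    congr 1
    exact congrArg Real.log (Finset.sum_congr rfl (fun c _ => by rw [hinner_star c]))
  refine ⟨le_of_eq hsum_star, fun A hA => ?_⟩
  set s : Fin C → ℝ := fun c => ⟪A c, x⟫ with hsdef
  have hs_sq : ∀ c, s c ^ 2 ≤ ‖A c‖ ^ 2 := by
    intro c
    have h1 : |s c| ≤ ‖A c‖ := by
      have := abs_real_inner_le_norm (A c) x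
      rwa [hx, mul_one] at this
    calc s c ^ 2 = |s c| ^ 2 := (sq_abs _).symm
      _ ≤ ‖A c‖ ^ 2 := by
          have := abs_nonneg (s c)
          nlinarith
  have hsK : ∑ c, s c ^ 2 ≤ K :=
    le_trans (Finset.sum_le_sum (fun c _ => hs_sq c)) hA
  have hcore := core_aux C hC K hK y s hsK ts hts
  have hLA : L A = -s y + Real.log (∑ c, Real.exp (s c)) := hL A
  constructor
  · rw [hLstar, hLA]; exact hcore.1
  · intro heq
    have hseq : s = ts := hcore.2 (by rw [← hLA, ← hLstar, heq])
    have hsK' : ∑ c, s c ^ 2 = K := by rw [hseq]; exact hts_sq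
    have hterm : ∀ c ∈ Finset.univ, ‖A c‖ ^ 2 - s c ^ 2 = 0 := by
      rw [← Finset.sum_eq_zero_iff_of_nonneg (fun c _ => by linarith [hs_sq c])]
      have hge : ∑ c, s c ^ 2 ≤ ∑ c, ‖A c‖ ^ 2 := Finset.sum_le_sum (fun c _ => hs_sq c)
      rw [Finset.sum_sub_distrib, hsK']
      linarith [hA, hge]
    funext c
    have hnc : ‖A c‖ ^ 2 = s c ^ 2 := by
      have := hterm c (Finset.mem_univ c); linarith
    have hzero : ‖A c - s c • x‖ ^ 2 = 0 := by
      rw [norm_sub_sq_real, real_inner_smul_right, norm_smul, hx, mul_one,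
        Real.norm_eq_abs, sq_abs, hnc]
      have : ⟪A c, x⟫ = s c := rfl
      rw [this]
      ring
    have : A c - s c • x = 0 := by
      have := pow_eq_zero_iff (n := 2) (by norm_num) |>.mp hzero
      exact norm_eq_zero.mp this
    have hAc : A c = s c • x := by
      rwa [sub_eq_zero] at this
    rw [hAc, hAstar' c, hseq]
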